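/- Let (g, ·) be a pre-Lie algebra and V a finite-dimensional vector space. Then (V; L, R) is a bimodule over g if and only if (V*; L* − R*, −R*) is a bimodule over g, where ⟨L*_x ξ, u⟩ = −⟨ξ, L_x u⟩ and ⟨R*_x ξ, u⟩ = −⟨ξ, R_x u⟩. -/
import Mathlib


def BimodFn {g V : Type*} [AddCommGroup g] [AddCommGroup V]
    (m : g → g → g) (L R : g → V → V) : Prop :=
  (∀ (x y : g) (u : V), L x (L y u) - L (m x y) u = L y (L x u) - L (m y x) u) ∧
  (∀ (x y : g) (u : V), L x (R y u) - R y (L x u) = R (m x y) u - R y (R x u))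

def PreLieFn {g : Type*} [AddCommGroup g] (m : g → g → g) : Prop :=
  ∀ x y z : g, m (m x y) z - m x (m y z) = m (m y x) z - m y (m x z)

/-- `(V; L, R)` is a bimodule over the pre-Lie algebra `g` iff
`(V*; L* − R*, −R*)` is a bimodule over `g`, where `⟨L*_x ξ, u⟩ = −⟨ξ, L_x u⟩`
and `⟨R*_x ξ, u⟩ = −⟨ξ, R_x u⟩`. -/
theorem bimodule_iff_dual_bimodule {K g V : Type*} [Field K]
    [AddCommGroup g] [Module K g] [AddCommGroup V] [Module K V] [FiniteDimensional K V]
    (m : g →ₗ[K] g →ₗ[K] g) (hm : PreLieFn (fun x y => m x y))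
    (L R : g →ₗ[K] Module.End K V) :
    BimodFn (fun x y => m x y) (fun x u => L x u) (fun x u => R x u) ↔
    BimodFn (fun x y => m x y)
      (fun (x : g) (ξ : Module.Dual K V) => (-(L x).dualMap ξ) - (-(R x).dualMap ξ))
      (fun (x : g) (ξ : Module.Dual K V) => -(-(R x).dualMap ξ)) := by
  constructor
  · rintro ⟨h1, h2⟩
    constructor
    · intro x y ξ
      ext u
      have e1 := congrArg ξ (h1 x y u)
      have e2 := congrArg ξ (h2 x y u)
      have e2' := congrArg ξ (h2 y x u)
      simp only [map_sub] at e1 e2 e2'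
      simp only [LinearMap.sub_apply, LinearMap.neg_apply, LinearMap.dualMap_apply, map_sub,
        map_neg]
      linear_combination e2 - e2' - e1
    · intro x y ξ
      ext u
      have e2 := congrArg ξ (h2 x y u)
      simp only [map_sub] at e2
      simp only [LinearMap.sub_apply, LinearMap.neg_apply, LinearMap.dualMap_apply, map_sub,
        map_neg, neg_neg]
      linear_combination e2
  · rintro ⟨h1, h2⟩
    constructor
    · intro x y u
      rw [← sub_eq_zero, ← Module.forall_dual_apply_eq_zero_iff K]
      intro ξ
      have e1 := congrArg (fun φ : Module.Dual K V => φ u) (h1 x y ξ)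
      have e2 := congrArg (fun φ : Module.Dual K V => φ u) (h2 x y ξ)
      have e2' := congrArg (fun φ : Module.Dual K V => φ u) (h2 y x ξ)
      simp only [LinearMap.sub_apply, LinearMap.neg_apply, LinearMap.dualMap_apply, map_sub,
        map_neg, neg_neg] at e1 e2 e2'
      simp only [map_sub]
      linear_combination -e1 + e2 - e2'
    · intro x y u
      rw [← sub_eq_zero, ← Module.forall_dual_apply_eq_zero_iff K]
      intro ξ
      have e2 := congrArg (fun φ : Module.Dual K V => φ u) (h2 x y ξ)
      simp only [LinearMap.sub_apply, LinearMap.neg_apply, LinearMap.dualMap_apply, map_sub,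
        map_neg, neg_neg] at e2
      simp only [map_sub]
      linear_combination e2
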